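/- Let m ≥ 1, n ≥ 1, let u : ℝᵐ × ℝⁿ → ℝ be Lipschitz, and let H ⊆ ℝⁿ be a polarizer, acting on the second factor of ℝᵐ × ℝⁿ. Then the polarization u^H is Lipschitz, and for every 1 ≤ s < ∞, ∫_{ℝᵐ×ℝⁿ} ‖Du^H‖^s dx = ∫_{ℝᵐ×ℝⁿ} ‖Du‖^s dx, where Du denotes the total (Fréchet) derivative, which exists Lebesgue-almost everywhere by Rademacher's theorem, and both integrals are taken in [0, ∞]. -/

import Mathlib

open MeasureTheory MeasureTheory.Measure Metric Topology
open scoped RealInnerProductSpace ENNReal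

noncomputable section

/-- Reflection of `ℝⁿ` across the hyperplane `{y : ⟨y, e⟩ = c}`. -/
def reflectHyp {n : ℕ} (e : EuclideanSpace ℝ (Fin n)) (c : ℝ)
    (y : EuclideanSpace ℝ (Fin n)) : EuclideanSpace ℝ (Fin n) :=
  y - (2 * (⟪y, e⟫ - c)) • e

/-- Polarization of `u : M × ℝⁿ → ℝ` with respect to the polarizer
`H = {y : ⟨y, e⟩ > c}`. -/
def polarize {M : Type*} {n : ℕ} (e : EuclideanSpace ℝ (Fin n)) (c : ℝ)
    (u : M × EuclideanSpace ℝ (Fin n) → ℝ)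
    (z : M × EuclideanSpace ℝ (Fin n)) : ℝ :=
  if c < ⟪z.2, e⟫ then max (u z) (u (z.1, reflectHyp e c z.2))
  else min (u z) (u (z.1, reflectHyp e c z.2))

namespace StmtAux

variable {n : ℕ} (e : EuclideanSpace ℝ (Fin n)) (c : ℝ)

/-- Linear reflection across the hyperplane orthogonal to `e` through `0`. -/
def reflLinear : EuclideanSpace ℝ (Fin n) →ₗ[ℝ] EuclideanSpace ℝ (Fin n) where
  toFun y := y - (2 * ⟪y, e⟫) • e
  map_add' a b := by
    simp only [inner_add_left, mul_add, add_smul]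
    abel
  map_smul' r a := by
    simp only [real_inner_smul_left, RingHom.id_apply, smul_sub, smul_smul]
    ring_nf

lemma inner_self_e (he : ‖e‖ = 1) : ⟪e, e⟫ = 1 := by
  rw [real_inner_self_eq_norm_sq, he]; norm_num

lemma reflLinear_apply (y : EuclideanSpace ℝ (Fin n)) :
    reflLinear e y = y - (2 * ⟪y, e⟫) • e := rfl

lemma reflLinear_invol (he : ‖e‖ = 1) : Function.Involutive (reflLinear e) := by
  intro y
  simp only [reflLinear_apply, inner_sub_left, real_inner_smul_left, inner_self_e e he, mul_one]
  rw [show 2 * (⟪y, e⟫ - 2 * ⟪y, e⟫) = -(2 * ⟪y, e⟫) by ring]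
  simp

lemma reflLinear_norm (he : ‖e‖ = 1) (y : EuclideanSpace ℝ (Fin n)) :
    ‖reflLinear e y‖ = ‖y‖ := by
  have h1 : ‖reflLinear e y‖ ^ 2 = ‖y‖ ^ 2 := by
    rw [reflLinear_apply, norm_sub_sq_real, real_inner_smul_right, norm_smul,
      Real.norm_eq_abs, he, mul_one, sq_abs]
    ring
  have := congrArg Real.sqrt h1
  rwa [Real.sqrt_sq (norm_nonneg _), Real.sqrt_sq (norm_nonneg _)] at this

/-- The reflection as a linear isometry equivalence. -/
def reflIso (he : ‖e‖ = 1) : EuclideanSpace ℝ (Fin n) ≃ₗᵢ[ℝ] EuclideanSpace ℝ (Fin n) :=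
  ⟨LinearEquiv.ofInvolutive (reflLinear e) (reflLinear_invol e he), reflLinear_norm e he⟩

lemma reflIso_apply (he : ‖e‖ = 1) (y : EuclideanSpace ℝ (Fin n)) :
    reflIso e he y = y - (2 * ⟪y, e⟫) • e := rfl

lemma reflectHyp_eq (he : ‖e‖ = 1) (y : EuclideanSpace ℝ (Fin n)) :
    reflectHyp e c y = reflIso e he y + (2 * c) • e := by
  simp only [reflectHyp, reflIso_apply, mul_sub, sub_smul]
  abel

lemma measurePreserving_reflectHyp (he : ‖e‖ = 1) :
    MeasurePreserving (reflectHyp e c) (volume : Measure (EuclideanSpace ℝ (Fin n))) volume := by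
  have h := (measurePreserving_add_right (volume : Measure (EuclideanSpace ℝ (Fin n)))
      ((2 * c) • e)).comp (reflIso e he).measurePreserving
  have hfun : reflectHyp e c = (fun x => x + (2 * c) • e) ∘ (reflIso e he) := by
    funext y
    exact reflectHyp_eq e c he y
  rw [hfun]
  exact h

lemma inner_reflectHyp (he : ‖e‖ = 1) (y : EuclideanSpace ℝ (Fin n)) :
    ⟪reflectHyp e c y, e⟫ = 2 * c - ⟪y, e⟫ := by
  simp only [reflectHyp, inner_sub_left, real_inner_smul_left, inner_self_e e he, mul_one]
  ring

lemma reflectHyp_invol (he : ‖e‖ = 1) : Function.Involutive (reflectHyp e c) := by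
  intro y
  simp only [reflectHyp, inner_sub_left, real_inner_smul_left, inner_self_e e he, mul_one]
  rw [show 2 * (⟪y, e⟫ - 2 * (⟪y, e⟫ - c) - c) = -(2 * (⟪y, e⟫ - c)) by ring, neg_smul]
  abel

lemma dist_reflectHyp (he : ‖e‖ = 1) (y y' : EuclideanSpace ℝ (Fin n)) :
    dist (reflectHyp e c y) (reflectHyp e c y') = dist y y' := by
  rw [reflectHyp_eq e c he y, reflectHyp_eq e c he y', dist_add_right]
  exact (reflIso e he).dist_map y y'

lemma dist_reflectHyp_self (he : ‖e‖ = 1) (y : EuclideanSpace ℝ (Fin n)) :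
    dist y (reflectHyp e c y) = 2 * |⟪y, e⟫ - c| := by
  rw [dist_eq_norm, reflectHyp, sub_sub_cancel, norm_smul, Real.norm_eq_abs, he, mul_one,
    abs_mul]
  norm_num

end StmtAux

namespace StmtAux2

open StmtAux

abbrev Ep (m : ℕ) := EuclideanSpace ℝ (Fin m)

variable {m n : ℕ}

instance : (volume : Measure (Ep m × Ep n)).IsAddHaarMeasure :=
  prod.instIsAddHaarMeasure volume volume

/-- The reflection on the second factor of the product. -/
def Tmap (e : Ep n) (c : ℝ) (z : Ep m × Ep n) : Ep m × Ep n :=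
  (z.1, reflectHyp e c z.2)

variable (e : Ep n) (c : ℝ)

lemma Tmap_invol (he : ‖e‖ = 1) : Function.Involutive (Tmap (m := m) e c) := by
  intro z
  simp only [Tmap, reflectHyp_invol e c he z.2]

lemma measurePreserving_Tmap (he : ‖e‖ = 1) :
    MeasurePreserving (Tmap (m := m) e c) volume volume :=
  (MeasurePreserving.id (volume : Measure (Ep m))).prod (measurePreserving_reflectHyp e c he)

lemma isometry_Tmap (he : ‖e‖ = 1) : Isometry (Tmap (m := m) e c) := by
  apply Isometry.of_dist_eq
  intro z z'
  rw [Tmap, Tmap, Prod.dist_eq, Prod.dist_eq]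
  simp only [dist_reflectHyp e c he]

/-- The product linear isometry equivalence acting as reflection on the second factor. -/
def prodIso (he : ‖e‖ = 1) : (Ep m × Ep n) ≃ₗᵢ[ℝ] (Ep m × Ep n) where
  toLinearEquiv := (LinearEquiv.refl ℝ (Ep m)).prodCongr (reflIso e he).toLinearEquiv
  norm_map' z := by
    simp only [Prod.norm_def, LinearEquiv.prodCongr_apply, LinearEquiv.refl_apply]
    rw [show ‖((reflIso e he).toLinearEquiv z.2 : Ep n)‖ = ‖z.2‖ from (reflIso e he).norm_map z.2]

lemma prodIso_apply (he : ‖e‖ = 1) (z : Ep m × Ep n) :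
    prodIso e he z = (z.1, reflIso e he z.2) := rfl

lemma hasFDerivAt_Tmap (he : ‖e‖ = 1) (z : Ep m × Ep n) :
    HasFDerivAt (Tmap e c)
      ((prodIso (m := m) e he).toLinearIsometry.toContinuousLinearMap) z := by
  have heq : Tmap (m := m) e c = fun w =>
      (prodIso (m := m) e he).toLinearIsometry.toContinuousLinearMap w
        + ((0 : Ep m), (2 * c) • e) := by
    funext w
    apply Prod.ext
    · show w.1 = w.1 + 0
      rw [add_zero]
    · show reflectHyp e c w.2 = reflIso e he w.2 + (2 * c) • e
      exact reflectHyp_eq e c he w.2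
  rw [heq]
  exact (ContinuousLinearMap.hasFDerivAt _).add_const _

variable (u : Ep m × Ep n → ℝ) (K : NNReal) (hu : LipschitzWith K u)

/-- The reflected function. -/
def vmap (z : Ep m × Ep n) : ℝ := u (Tmap e c z)

lemma polarize_pos {z : Ep m × Ep n} (h : c < ⟪z.2, e⟫) :
    polarize e c u z = max (u z) (vmap e c u z) := if_pos h

lemma polarize_neg {z : Ep m × Ep n} (h : ¬ c < ⟪z.2, e⟫) :
    polarize e c u z = min (u z) (vmap e c u z) := if_neg h

section Lipschitz

variable {u K}
include hu

lemma lipschitz_vmap (he : ‖e‖ = 1) : LipschitzWith K (vmap e c u) := by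
  have := hu.comp (isometry_Tmap e c he).lipschitz
  rw [mul_one] at this
  exact this

lemma abs_u_sub_vmap (he : ‖e‖ = 1) (z : Ep m × Ep n) :
    |u z - vmap e c u z| ≤ 2 * K * |⟪z.2, e⟫ - c| := by
  have h1 := hu.dist_le_mul z (Tmap e c z)
  have h2 : dist z (Tmap e c z) = 2 * |⟪z.2, e⟫ - c| := by
    rw [Tmap, Prod.dist_eq]
    simp only [dist_self]
    rw [dist_reflectHyp_self e c he z.2]
    exact max_eq_right (by positivity)
  rw [h2, Real.dist_eq] at h1
  calc |u z - vmap e c u z| ≤ K * (2 * |⟪z.2, e⟫ - c|) := h1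
  _ = 2 * K * |⟪z.2, e⟫ - c| := by ring

omit hu in
lemma inner_dist_le (z z' : Ep m × Ep n) (he : ‖e‖ = 1) :
    |⟪z.2, e⟫ - ⟪z'.2, e⟫| ≤ dist z z' := by
  have h1 : ⟪z.2, e⟫ - ⟪z'.2, e⟫ = ⟪z.2 - z'.2, e⟫ := by rw [inner_sub_left]
  rw [h1]
  calc |⟪z.2 - z'.2, e⟫| ≤ ‖z.2 - z'.2‖ * ‖e‖ := abs_real_inner_le_norm _ _
  _ = dist z.2 z'.2 := by rw [he, mul_one, dist_eq_norm]
  _ ≤ dist z z' := by rw [Prod.dist_eq]; exact le_max_right _ _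

lemma polarize_dist_mixed (he : ‖e‖ = 1) {z z' : Ep m × Ep n}
    (hz : c < ⟪z.2, e⟫) (hz' : ¬ c < ⟪z'.2, e⟫) :
    dist (polarize e c u z) (polarize e c u z') ≤ 3 * K * dist z z' := by
  rw [polarize_pos e c u hz, polarize_neg e c u hz', Real.dist_eq]
  set a := u z; set b := vmap e c u z; set a' := u z'; set b' := vmap e c u z'
  have h1 : max a b - a ≤ |a - b| := by
    rcases le_total b a with h | h
    · rw [max_eq_left h]; simp [abs_nonneg]
    · rw [max_eq_right h, abs_sub_comm, abs_of_nonneg (by linarith)]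
  have h2 : a' - min a' b' ≤ |a' - b'| := by
    rcases le_total a' b' with h | h
    · rw [min_eq_left h]; simp [abs_nonneg]
    · rw [min_eq_right h, abs_of_nonneg (by linarith)]
  have h3 : |a - b| ≤ 2 * K * (⟪z.2, e⟫ - c) := by
    have h := abs_u_sub_vmap e c hu he z
    rwa [abs_of_pos (show (0:ℝ) < ⟪z.2, e⟫ - c by linarith)] at h
  have h4 : |a' - b'| ≤ 2 * K * (c - ⟪z'.2, e⟫) := by
    have h := abs_u_sub_vmap e c hu he z'
    push_neg at hz'
    rwa [abs_of_nonpos (show ⟪z'.2, e⟫ - c ≤ 0 by linarith), neg_sub] at h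
  have h5 : |a - a'| ≤ K * dist z z' := by
    have := hu.dist_le_mul z z'
    rwa [Real.dist_eq] at this
  have h6 : ⟪z.2, e⟫ - ⟪z'.2, e⟫ ≤ dist z z' := le_trans (le_abs_self _) (inner_dist_le e z z' he)
  have hmaxa : max a b ≥ a := le_max_left _ _
  have hmina : min a' b' ≤ a' := min_le_left _ _
  have habs : |max a b - min a' b'| ≤ (max a b - a) + |a - a'| + (a' - min a' b') := by
    rw [abs_le]
    constructor
    · have := neg_abs_le (a - a')
      nlinarith [abs_nonneg (a - a'), sub_nonneg.2 hmaxa, sub_nonneg.2 hmina]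
    · have := le_abs_self (a - a')
      nlinarith [abs_nonneg (a - a'), sub_nonneg.2 hmaxa, sub_nonneg.2 hmina]
  have hK0 : (0 : ℝ) ≤ K := K.2
  calc |max a b - min a' b'| ≤ (max a b - a) + |a - a'| + (a' - min a' b') := habs
  _ ≤ |a - b| + K * dist z z' + |a' - b'| := by linarith
  _ ≤ 2 * K * (⟪z.2, e⟫ - c) + K * dist z z' + 2 * K * (c - ⟪z'.2, e⟫) := by linarith
  _ = K * dist z z' + 2 * K * (⟪z.2, e⟫ - ⟪z'.2, e⟫) := by ring
  _ ≤ K * dist z z' + 2 * K * dist z z' := by nlinarith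
  _ = 3 * K * dist z z' := by ring

lemma lipschitz_polarize (he : ‖e‖ = 1) : LipschitzWith (3 * K) (polarize e c u) := by
  have hv := lipschitz_vmap e c hu he
  apply LipschitzWith.of_dist_le_mul
  intro z z'
  have hcoe : ((3 * K : NNReal) : ℝ) = 3 * (K : ℝ) := by push_cast; ring
  rw [hcoe]
  have hK0 : (0 : ℝ) ≤ K := K.2
  by_cases hz : c < ⟪z.2, e⟫ <;> by_cases hz' : c < ⟪z'.2, e⟫
  · rw [polarize_pos e c u hz, polarize_pos e c u hz', Real.dist_eq]
    have h1 := hu.dist_le_mul z z'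
    have h2 := hv.dist_le_mul z z'
    rw [Real.dist_eq] at h1 h2
    have := abs_max_sub_max_le_max (u z) (vmap e c u z) (u z') (vmap e c u z')
    have hd : (0:ℝ) ≤ dist z z' := dist_nonneg
    rcases max_cases |u z - u z'| |vmap e c u z - vmap e c u z'| with ⟨h3, _⟩ | ⟨h3, _⟩ <;>
      rw [h3] at this <;> nlinarith
  · exact polarize_dist_mixed e c hu he hz hz'
  · rw [dist_comm]
    have := polarize_dist_mixed e c hu he hz' hz
    rwa [dist_comm z' z] at this
  · rw [polarize_neg e c u hz, polarize_neg e c u hz', Real.dist_eq]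
    have h1 := hu.dist_le_mul z z'
    have h2 := hv.dist_le_mul z z'
    rw [Real.dist_eq] at h1 h2
    have := abs_min_sub_min_le_max (u z) (vmap e c u z) (u z') (vmap e c u z')
    have hd : (0:ℝ) ≤ dist z z' := dist_nonneg
    rcases max_cases |u z - u z'| |vmap e c u z - vmap e c u z'| with ⟨h3, _⟩ | ⟨h3, _⟩ <;>
      rw [h3] at this <;> nlinarith

end Lipschitz

lemma hyperplane_null (he : ‖e‖ = 1) :
    volume {z : Ep m × Ep n | ⟪z.2, e⟫ = c} = 0 := by
  set L : (Ep m × Ep n) →ₗ[ℝ] ℝ :=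
    { toFun := fun z => ⟪z.2, e⟫
      map_add' := fun a b => by simp [inner_add_left]
      map_smul' := fun r a => by
        simp only [RingHom.id_apply, smul_eq_mul]
        exact real_inner_smul_left a.2 e r }
  have hL : ∀ z : Ep m × Ep n, L z = ⟪z.2, e⟫ := fun z => rfl
  set z0 : Ep m × Ep n := (0, c • e) with hz0
  have hLz0 : L z0 = c := by
    rw [hL]
    show ⟪c • e, e⟫ = c
    rw [real_inner_smul_left, real_inner_self_eq_norm_sq, he]
    norm_num
  have hLzz : ∀ z : Ep m × Ep n, L (z + -z0) = ⟪z.2, e⟫ - c := fun z => by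
    rw [_root_.map_add, _root_.map_neg, hLz0, hL]; ring
  have hset : {z : Ep m × Ep n | ⟪z.2, e⟫ = c}
      = (fun w => w + (-z0)) ⁻¹' (LinearMap.ker L) := by
    ext z
    simp only [Set.mem_setOf_eq, Set.mem_preimage, SetLike.mem_coe, LinearMap.mem_ker, hLzz]
    constructor <;> intro h <;> linarith
  rw [hset, measure_preimage_add_right]
  apply Measure.addHaar_submodule
  intro htop
  have h1 : (0, e) ∈ LinearMap.ker L := htop ▸ Submodule.mem_top
  have h2 : L (0, e) = 1 := by
    rw [hL]
    show ⟪e, e⟫ = 1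
    rw [real_inner_self_eq_norm_sq, he]
    norm_num
  rw [LinearMap.mem_ker] at h1
  rw [h1] at h2
  norm_num at h2

end StmtAux2

open StmtAux StmtAux2

/-- polarization of a Lipschitz function on `ℝᵐ × ℝⁿ` is Lipschitz and
preserves the `L^s`-integrals of the norm of the total derivative. -/
theorem stmt_2 {m n : ℕ} (hm : 1 ≤ m) (hn : 1 ≤ n)
    (u : EuclideanSpace ℝ (Fin m) × EuclideanSpace ℝ (Fin n) → ℝ)
    (K : NNReal) (hu : LipschitzWith K u)
    (e : EuclideanSpace ℝ (Fin n)) (he : ‖e‖ = 1) (c : ℝ) :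
    (∃ K' : NNReal, LipschitzWith K' (polarize e c u)) ∧
    (∀ s : ℝ, 1 ≤ s →
      ∫⁻ z, ENNReal.ofReal (‖fderiv ℝ (polarize e c u) z‖ ^ s) =
        ∫⁻ z, ENNReal.ofReal (‖fderiv ℝ u z‖ ^ s)) := by
  have hp : LipschitzWith (3 * K) (polarize e c u) := lipschitz_polarize e c hu he
  refine ⟨⟨3 * K, hp⟩, ?_⟩
  intro s hs
  set T : (EuclideanSpace ℝ (Fin m) × EuclideanSpace ℝ (Fin n)) → (EuclideanSpace ℝ (Fin m) × EuclideanSpace ℝ (Fin n)) := Tmap e c with hT_def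
  set v : (EuclideanSpace ℝ (Fin m) × EuclideanSpace ℝ (Fin n)) → ℝ := vmap e c u with hv_def
  set p : (EuclideanSpace ℝ (Fin m) × EuclideanSpace ℝ (Fin n)) → ℝ := polarize e c u with hp_def
  have hvu : ∀ z : (EuclideanSpace ℝ (Fin m) × EuclideanSpace ℝ (Fin n)), v z = u (T z) := fun z => rfl
  have hTmp : MeasurePreserving T volume volume := measurePreserving_Tmap e c he
  have hTinvol : Function.Involutive T := Tmap_invol e c he
  have hvcont : Continuous v := (hu.comp (isometry_Tmap e c he).lipschitz).continuous
  have hucont : Continuous u := hu.continuous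
  have hinner : Continuous fun z : (EuclideanSpace ℝ (Fin m) × EuclideanSpace ℝ (Fin n)) => ⟪z.2, e⟫ :=
    Continuous.inner continuous_snd continuous_const
  -- the set where the polarization agrees with `u` to first order
  set C : Set (EuclideanSpace ℝ (Fin m) × EuclideanSpace ℝ (Fin n)) := {z | (c < ⟪z.2, e⟫ ∧ v z ≤ u z) ∨ (¬ c < ⟪z.2, e⟫ ∧ u z ≤ v z)} with hC_def
  have hC : MeasurableSet C := by
    have : C = ({z : (EuclideanSpace ℝ (Fin m) × EuclideanSpace ℝ (Fin n)) | c < ⟪z.2, e⟫} ∩ {z : (EuclideanSpace ℝ (Fin m) × EuclideanSpace ℝ (Fin n)) | v z ≤ u z})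
        ∪ ({z : (EuclideanSpace ℝ (Fin m) × EuclideanSpace ℝ (Fin n)) | c < ⟪z.2, e⟫}ᶜ ∩ {z : (EuclideanSpace ℝ (Fin m) × EuclideanSpace ℝ (Fin n)) | u z ≤ v z}) := by
      ext z
      simp [hC_def, Set.mem_setOf_eq, Set.mem_inter_iff, Set.mem_union, Set.mem_compl_iff]
    rw [this]
    exact ((measurableSet_lt measurable_const hinner.measurable).inter
        (measurableSet_le hvcont.measurable hucont.measurable)).union
      ((measurableSet_lt measurable_const hinner.measurable).compl.inter
        (measurableSet_le hucont.measurable hvcont.measurable))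
  have hPlaneNull : volume {z : (EuclideanSpace ℝ (Fin m) × EuclideanSpace ℝ (Fin n)) | ⟪z.2, e⟫ = c} = 0 := hyperplane_null e c he
  have hPlaneNe : ∀ᵐ z : (EuclideanSpace ℝ (Fin m) × EuclideanSpace ℝ (Fin n)), ⟪z.2, e⟫ ≠ c := by
    rw [ae_iff]
    simpa using hPlaneNull
  -- T-invariance of C away from the hyperplane
  have hCinv : ∀ z : (EuclideanSpace ℝ (Fin m) × EuclideanSpace ℝ (Fin n)), ⟪z.2, e⟫ ≠ c → (T z ∈ C ↔ z ∈ C) := by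
    intro z hz
    have h1 : ⟪(T z).2, e⟫ = 2 * c - ⟪z.2, e⟫ := inner_reflectHyp e c he z.2
    have h2 : u (T z) = v z := rfl
    have h3 : v (T z) = u z := by
      show u (T (T z)) = u z
      rw [hTinvol z]
    simp only [hC_def, Set.mem_setOf_eq, h1, h2, h3]
    have hiff1 : (c < 2 * c - ⟪z.2, e⟫) ↔ ¬ c < ⟪z.2, e⟫ := by
      constructor
      · intro hh hh2; linarith
      · intro hh
        rcases lt_or_gt_of_ne hz with h | h
        · linarith
        · exact absurd h hh
    rw [hiff1]
    tauto
  -- the open sets used for local identification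
  have hAopen : IsOpen {w : (EuclideanSpace ℝ (Fin m) × EuclideanSpace ℝ (Fin n)) | c < ⟪w.2, e⟫} := isOpen_lt continuous_const hinner
  have hBopen : IsOpen {w : (EuclideanSpace ℝ (Fin m) × EuclideanSpace ℝ (Fin n)) | ⟪w.2, e⟫ < c} := isOpen_lt hinner continuous_const
  have huvopen : IsOpen {w : (EuclideanSpace ℝ (Fin m) × EuclideanSpace ℝ (Fin n)) | u w < v w} := isOpen_lt hucont hvcont
  have hvuopen : IsOpen {w : (EuclideanSpace ℝ (Fin m) × EuclideanSpace ℝ (Fin n)) | v w < u w} := isOpen_lt hvcont hucont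
  -- derivative of T
  set Φ : ((EuclideanSpace ℝ (Fin m) × EuclideanSpace ℝ (Fin n)) →L[ℝ] (EuclideanSpace ℝ (Fin m) × EuclideanSpace ℝ (Fin n))) := (prodIso e he).toLinearIsometry.toContinuousLinearMap with hΦ_def
  have hTd : ∀ z : (EuclideanSpace ℝ (Fin m) × EuclideanSpace ℝ (Fin n)), HasFDerivAt T Φ z := hasFDerivAt_Tmap e c he
  -- the key pointwise almost-everywhere identification
  have key : ∀ᵐ z : (EuclideanSpace ℝ (Fin m) × EuclideanSpace ℝ (Fin n)), (z ∈ C → fderiv ℝ p z = fderiv ℝ u z)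
      ∧ (z ∉ C → ‖fderiv ℝ p z‖ = ‖fderiv ℝ u (T z)‖) := by
    filter_upwards [hu.ae_differentiableAt, hp.ae_differentiableAt,
      hTmp.quasiMeasurePreserving.ae hu.ae_differentiableAt, hPlaneNe]
      with z hdu hdp hduT hzNe
    constructor
    · -- on C the derivative of p equals that of u
      intro hzC
      rcases lt_or_gt_of_ne hzNe with hlt | hgt
      · -- below the hyperplane : p behaves like min(u,v) and u ≤ v
        have hzA : ¬ c < ⟪z.2, e⟫ := not_lt.mpr hlt.le
        have huv : u z ≤ v z := by
          rcases hzC with ⟨h1, _⟩ | ⟨_, h2⟩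
          · exact absurd h1 hzA
          · exact h2
        rcases eq_or_lt_of_le huv with heq | hstrict
        · -- equality case : local max argument
          have hub : ∀ᶠ w in 𝓝 z, p w ≤ u w := by
            filter_upwards [hBopen.mem_nhds hlt] with w hw
            rw [hp_def, polarize_neg e c u (not_lt.mpr (le_of_lt hw))]
            exact min_le_left _ _
          have hpz : p z = u z := by
            rw [hp_def, polarize_neg e c u hzA]
            exact min_eq_left huv
          have hmax : IsLocalMax (fun w => p w - u w) z := by
            filter_upwards [hub] with w hw
            simp only [hpz]
            linarith
          have h0 := hmax.fderiv_eq_zero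
          rw [fderiv_fun_sub hdp hdu, sub_eq_zero] at h0
          exact h0
        · -- strict case : p = u near z
          have hev : p =ᶠ[𝓝 z] u := by
            filter_upwards [hBopen.mem_nhds hlt, huvopen.mem_nhds hstrict] with w hw1 hw2
            rw [hp_def, polarize_neg e c u (not_lt.mpr (le_of_lt hw1))]
            exact min_eq_left (le_of_lt hw2)
          exact hev.fderiv_eq
      · -- above the hyperplane : p behaves like max(u,v) and v ≤ u
        have hvu' : v z ≤ u z := by
          rcases hzC with ⟨_, h1⟩ | ⟨h2, _⟩
          · exact h1
          · exact absurd hgt h2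
        rcases eq_or_lt_of_le hvu' with heq | hstrict
        · have hub : ∀ᶠ w in 𝓝 z, u w ≤ p w := by
            filter_upwards [hAopen.mem_nhds hgt] with w hw
            rw [hp_def, polarize_pos e c u hw]
            exact le_max_left _ _
          have hpz : p z = u z := by
            rw [hp_def, polarize_pos e c u hgt]
            exact max_eq_left hvu'
          have hmin : IsLocalMin (fun w => p w - u w) z := by
            filter_upwards [hub] with w hw
            simp only [hpz]
            linarith
          have h0 := hmin.fderiv_eq_zero
          rw [fderiv_fun_sub hdp hdu, sub_eq_zero] at h0
          exact h0
        · have hev : p =ᶠ[𝓝 z] u := by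
            filter_upwards [hAopen.mem_nhds hgt, hvuopen.mem_nhds hstrict] with w hw1 hw2
            rw [hp_def, polarize_pos e c u hw1]
            exact max_eq_left (le_of_lt hw2)
          exact hev.fderiv_eq
    · -- off C the derivative of p has the norm of that of u at the reflected point
      intro hzC
      have hev : p =ᶠ[𝓝 z] v := by
        rcases lt_or_gt_of_ne hzNe with hlt | hgt
        · have hzA : ¬ c < ⟪z.2, e⟫ := not_lt.mpr hlt.le
          have hvu' : v z < u z := by
            by_contra hcon
            push_neg at hcon
            exact hzC (Or.inr ⟨hzA, hcon⟩)
          filter_upwards [hBopen.mem_nhds hlt, hvuopen.mem_nhds hvu'] with w hw1 hw2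
          rw [hp_def, polarize_neg e c u (not_lt.mpr (le_of_lt hw1))]
          exact min_eq_right (le_of_lt hw2)
        · have huv : u z < v z := by
            by_contra hcon
            push_neg at hcon
            exact hzC (Or.inl ⟨hgt, hcon⟩)
          filter_upwards [hAopen.mem_nhds hgt, huvopen.mem_nhds huv] with w hw1 hw2
          rw [hp_def, polarize_pos e c u hw1]
          exact max_eq_right (le_of_lt hw2)
      have hvD : HasFDerivAt v ((fderiv ℝ u (T z)).comp Φ) z :=
        hduT.hasFDerivAt.comp z (hTd z)
      rw [hev.fderiv_eq, hvD.fderiv, hΦ_def]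
      exact ContinuousLinearMap.opNorm_comp_linearIsometryEquiv (fderiv ℝ u (T z)) (prodIso e he)
  -- measurability of the integrand for u
  set f : (EuclideanSpace ℝ (Fin m) × EuclideanSpace ℝ (Fin n)) → ℝ≥0∞ := fun z => ENNReal.ofReal (‖fderiv ℝ u z‖ ^ s) with hf_def
  have hfm : Measurable f := by
    apply Measurable.ennreal_ofReal
    exact (Real.continuous_rpow_const (by linarith)).measurable.comp
      (measurable_fderiv ℝ u).norm
  -- C and its complement are essentially T-invariant
  have hae2 : (Cᶜ : Set (EuclideanSpace ℝ (Fin m) × EuclideanSpace ℝ (Fin n))) =ᵐ[(volume : Measure (EuclideanSpace ℝ (Fin m) × EuclideanSpace ℝ (Fin n)))] (T ⁻¹' Cᶜ : Set (EuclideanSpace ℝ (Fin m) × EuclideanSpace ℝ (Fin n))) := by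
    rw [Filter.eventuallyEq_set]
    filter_upwards [hPlaneNe] with z hz
    simp only [Set.mem_compl_iff, Set.mem_preimage]
    rw [hCinv z hz]
  -- assemble the integral identity
  have key1 : ∀ᵐ z : (EuclideanSpace ℝ (Fin m) × EuclideanSpace ℝ (Fin n)), z ∈ C → ENNReal.ofReal (‖fderiv ℝ p z‖ ^ s) = f z := by
    filter_upwards [key] with z hz hzC
    rw [hf_def, (hz.1 hzC)]
  have key2 : ∀ᵐ z : (EuclideanSpace ℝ (Fin m) × EuclideanSpace ℝ (Fin n)), z ∈ Cᶜ → ENNReal.ofReal (‖fderiv ℝ p z‖ ^ s) = f (T z) := by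
    filter_upwards [key] with z hz hzC
    rw [hf_def, (hz.2 hzC)]
  calc ∫⁻ z, ENNReal.ofReal (‖fderiv ℝ p z‖ ^ s)
      = (∫⁻ z in C, ENNReal.ofReal (‖fderiv ℝ p z‖ ^ s))
        + ∫⁻ z in Cᶜ, ENNReal.ofReal (‖fderiv ℝ p z‖ ^ s) :=
        (lintegral_add_compl _ hC).symm
    _ = (∫⁻ z in C, f z) + ∫⁻ z in Cᶜ, f (T z) := by
        congr 1
        · apply lintegral_congr_ae
          filter_upwards [ae_restrict_mem hC, ae_restrict_of_ae key1] with z h1 h2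
          exact h2 h1
        · apply lintegral_congr_ae
          filter_upwards [ae_restrict_mem hC.compl, ae_restrict_of_ae key2] with z h1 h2
          exact h2 h1
    _ = (∫⁻ z in C, f z) + ∫⁻ z in T ⁻¹' Cᶜ, f (T z) := by
        rw [setLIntegral_congr hae2]
    _ = (∫⁻ z in C, f z) + ∫⁻ z in Cᶜ, f z := by
        rw [hTmp.setLIntegral_comp_preimage hC.compl hfm]
    _ = ∫⁻ z, f z := lintegral_add_compl f hC

end
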